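/- Fix $k,a,\sigma>0$ and $H\in(0,1/2)$, and let $g:[0,\infty)\to\mathbb{R}$ be a function which is locally H\"older continuous of every order $\gamma < H$ (i.e. for every $T>0$ and $\gamma\in(0,H)$ there is $C>0$ with $|g(t)-g(s)|\le C|t-s|^{\gamma}$ for $0\le s\le t\le T$). Under the setup of the pathwise $\varepsilon$-approximations driven by $g$ with finite pointwise limit $Y$, the limit satisfies $Y(t)\ge 0$ for all $t\ge 0$; hence $\{t\ge 0 : Y(t)\le 0\}=\{t\ge 0 : Y(t)=0\}$. -/

import Mathlib

open Filter Topology MeasureTheory Set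

/-- Pathwise version of Lemma 4: nonnegativity of the limit square root
process when the driving path is locally Hölder of every order γ < H,
H ∈ (0, 1/2). -/
theorem limit_process_nonneg
    (Y₀ k a σ H : ℝ) (hY₀ : 0 < Y₀) (hk : 0 < k) (ha : 0 < a) (hσ : 0 < σ)
    (hH : 0 < H) (hH' : H < 1/2)
    (g : ℝ → ℝ) (hg : Continuous g) (hg0 : g 0 = 0)
    (hHolder : ∀ T : ℝ, 0 < T → ∀ γ : ℝ, 0 < γ → γ < H →
      ∃ C : ℝ, 0 < C ∧ ∀ s t : ℝ, 0 ≤ s → s ≤ t → t ≤ T →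
        |g t - g s| ≤ C * (t - s) ^ γ)
    (Y : ℝ → ℝ → ℝ) (Ylim : ℝ → ℝ)
    (hYc : ∀ ε : ℝ, 0 < ε → Continuous (Y ε))
    (hYeq : ∀ ε : ℝ, 0 < ε → ∀ t : ℝ, 0 ≤ t →
      Y ε t = Y₀ + (∫ s in (0:ℝ)..t, k / ((if 0 < Y ε s then Y ε s else 0) + ε))
        - a * (∫ s in (0:ℝ)..t, Y ε s) + σ * g t)
    (hlim : ∀ t : ℝ, 0 ≤ t →
      Tendsto (fun ε => Y ε t) (𝓝[>] 0) (𝓝 (Ylim t))) :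
    (∀ t : ℝ, 0 ≤ t → 0 ≤ Ylim t) ∧
    {t : ℝ | 0 ≤ t ∧ Ylim t ≤ 0} = {t : ℝ | 0 ≤ t ∧ Ylim t = 0} := by
  have key : ∀ t : ℝ, 0 ≤ t → 0 ≤ Ylim t := by
    intro t ht
    set γ := H / 2 with hγdef
    have hγ0 : 0 < γ := by positivity
    have hγH : γ < H := by rw [hγdef]; linarith
    obtain ⟨C, hC, hCb⟩ := hHolder (t + 1) (by linarith) γ hγ0 hγH
    have ht1 : (0:ℝ) < (t + 1) ^ γ := Real.rpow_pos_of_pos (by linarith) γ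
    set b := k / (σ * C * (t + 1) ^ γ) with hbdef
    have hb : 0 < b := by
      apply div_pos hk; positivity
    -- main pathwise lower bound
    have lower : ∀ ε : ℝ, 0 < ε → ε ≤ b ^ 2 → -(σ * C) * ε ^ (γ / 2) ≤ Y ε t := by
      intro ε hε hεb
      have hεpow : 0 ≤ ε ^ (γ / 2) := Real.rpow_nonneg hε.le _
      by_cases hpos : 0 ≤ Y ε t
      · linarith [mul_nonneg (mul_nonneg hσ.le hC.le) hεpow]
      push_neg at hpos
      have hY0 : Y ε 0 = Y₀ := by
        have h0 := hYeq ε hε 0 le_rfl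
        simpa [intervalIntegral.integral_same, hg0] using h0
      set S := {s : ℝ | s ∈ Icc 0 t ∧ 0 ≤ Y ε s} with hSdef
      have hS0 : (0:ℝ) ∈ S := ⟨⟨le_rfl, ht⟩, by rw [hY0]; exact hY₀.le⟩
      have hSne : S.Nonempty := ⟨0, hS0⟩
      have hSbdd : BddAbove S := ⟨t, fun s hs => hs.1.2⟩
      set τ := sSup S with hτdef
      have hSclosed : IsClosed S := by
        have : S = Icc 0 t ∩ (Y ε) ⁻¹' (Ici 0) := by
          ext s; simp [hSdef, Set.mem_setOf_eq, and_comm]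
        rw [this]
        exact isClosed_Icc.inter (isClosed_Ici.preimage (hYc ε hε))
      have hτmem : τ ∈ S := hSclosed.csSup_mem hSne hSbdd
      have hτ0 : 0 ≤ τ := hτmem.1.1
      have hτt : τ ≤ t := hτmem.1.2
      have hτY : 0 ≤ Y ε τ := hτmem.2
      have hτlt : τ < t := lt_of_le_of_ne hτt (fun h => hpos.not_ge (h ▸ hτY))
      have hIoc : ∀ s ∈ Ioc τ t, Y ε s < 0 := by
        intro s hs
        by_contra hcon
        push_neg at hcon
        have hsS : s ∈ S := ⟨⟨hτ0.trans hs.1.le, hs.2⟩, hcon⟩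
        exact absurd (le_csSup hSbdd hsS) (not_le.mpr hs.1)
      have hτY' : Y ε τ ≤ 0 := by
        have hc : Tendsto (Y ε) (𝓝[>] τ) (𝓝 (Y ε τ)) :=
          ((hYc ε hε).continuousAt).continuousWithinAt
        have hev : ∀ᶠ s in 𝓝[>] τ, Y ε s ≤ 0 := by
          filter_upwards [Ioc_mem_nhdsGT hτlt] with s hs using (hIoc s hs).le
        exact le_of_tendsto hc hev
      have hτY0 : Y ε τ = 0 := le_antisymm hτY' hτY
      -- continuity / integrability of the drift integrand
      have hden : ∀ s : ℝ, 0 < (if 0 < Y ε s then Y ε s else 0) + ε := by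
        intro s; split_ifs with h <;> linarith
      have hiteeq : (fun s => (if 0 < Y ε s then Y ε s else 0) + ε)
          = fun s => max (Y ε s) 0 + ε := by
        funext s; congr 1
        split_ifs with h
        · exact (max_eq_left h.le).symm
        · exact (max_eq_right (not_lt.mp h)).symm
      have hcont1 : Continuous (fun s => k / ((if 0 < Y ε s then Y ε s else 0) + ε)) := by
        apply continuous_const.div
        · rw [hiteeq]
          exact ((hYc ε hε).max continuous_const).add continuous_const
        · intro s; exact (hden s).ne'
      have hint1 : ∀ x y : ℝ,
          IntervalIntegrable (fun s => k / ((if 0 < Y ε s then Y ε s else 0) + ε)) volume x y :=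
        fun x y => hcont1.intervalIntegrable x y
      have hint2 : ∀ x y : ℝ, IntervalIntegrable (Y ε) volume x y :=
        fun x y => (hYc ε hε).intervalIntegrable x y
      have h3 : (∫ s in (0:ℝ)..t, k / ((if 0 < Y ε s then Y ε s else 0) + ε))
          - (∫ s in (0:ℝ)..τ, k / ((if 0 < Y ε s then Y ε s else 0) + ε))
          = ∫ s in τ..t, k / ((if 0 < Y ε s then Y ε s else 0) + ε) :=
        intervalIntegral.integral_interval_sub_left (hint1 0 t) (hint1 0 τ)
      have h4 : (∫ s in (0:ℝ)..t, Y ε s) - (∫ s in (0:ℝ)..τ, Y ε s)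
          = ∫ s in τ..t, Y ε s :=
        intervalIntegral.integral_interval_sub_left (hint2 0 t) (hint2 0 τ)
      have heq : Y ε t - Y ε τ
          = (∫ s in τ..t, k / ((if 0 < Y ε s then Y ε s else 0) + ε))
            - a * (∫ s in τ..t, Y ε s) + σ * (g t - g τ) := by
        rw [hYeq ε hε t ht, hYeq ε hε τ hτ0, ← h3, ← h4]; ring
      have hYle : ∀ s ∈ Icc τ t, Y ε s ≤ 0 := by
        intro s hs
        rcases eq_or_lt_of_le hs.1 with h | h
        · rw [← h]; exact hτY0.le
        · exact (hIoc s ⟨h, hs.2⟩).le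
      have hdrift : (∫ s in τ..t, k / ((if 0 < Y ε s then Y ε s else 0) + ε))
          = (t - τ) * (k / ε) := by
        have hEq : EqOn (fun s => k / ((if 0 < Y ε s then Y ε s else 0) + ε))
            (fun _ => k / ε) (uIcc τ t) := by
          intro s hs
          rw [uIcc_of_le hτt] at hs
          have := hYle s hs
          simp only
          rw [if_neg (not_lt.mpr this), zero_add]
        rw [intervalIntegral.integral_congr hEq, intervalIntegral.integral_const,
          smul_eq_mul]
      have hB : (∫ s in τ..t, Y ε s) ≤ 0 := by
        have : 0 ≤ ∫ s in τ..t, -(Y ε s) :=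
          intervalIntegral.integral_nonneg hτt (fun u hu => by linarith [hYle u hu])
        rw [intervalIntegral.integral_neg] at this
        linarith
      have hgb : |g t - g τ| ≤ C * (t - τ) ^ γ := hCb τ t hτ0 hτt (by linarith)
      have hg1 : -(C * (t - τ) ^ γ) ≤ g t - g τ := (abs_le.mp hgb).1
      have hmain : (t - τ) * (k / ε) - σ * (C * (t - τ) ^ γ) ≤ Y ε t := by
        have h5 : a * (∫ s in τ..t, Y ε s) ≤ 0 :=
          mul_nonpos_iff.mpr (Or.inl ⟨ha.le, hB⟩)
        have h6 : σ * (-(C * (t - τ) ^ γ)) ≤ σ * (g t - g τ) :=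
          mul_le_mul_of_nonneg_left hg1 hσ.le
        rw [hdrift] at heq
        linarith [heq, h5, h6, hτY0]
      set u := t - τ with hudef
      have hu0 : 0 < u := by rw [hudef]; linarith
      have hut : u ≤ t + 1 := by rw [hudef]; linarith
      have hupow : (0:ℝ) ≤ u ^ γ := Real.rpow_nonneg hu0.le γ
      by_cases hcase : u ≤ ε ^ ((1:ℝ)/2)
      · -- small excursion: Hölder term dominates but is at most ε^{γ/2}
        have h7 : u ^ γ ≤ (ε ^ ((1:ℝ)/2)) ^ γ := Real.rpow_le_rpow hu0.le hcase hγ0.le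
        have h8 : (ε ^ ((1:ℝ)/2)) ^ γ = ε ^ (γ / 2) := by
          rw [← Real.rpow_mul hε.le]; congr 1; ring
        rw [h8] at h7
        have h9 : 0 ≤ u * (k / ε) := by positivity
        linarith [hmain, h9, mul_le_mul_of_nonneg_left h7 (mul_nonneg hσ.le hC.le)]
      · -- large excursion: drift term dominates
        push_neg at hcase
        have hε12 : 0 < ε ^ ((1:ℝ)/2) := Real.rpow_pos_of_pos hε _
        have h7 : ε ^ ((1:ℝ)/2) ≤ b := by
          have h7a : ε ^ ((1:ℝ)/2) ≤ (b ^ 2) ^ ((1:ℝ)/2) :=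
            Real.rpow_le_rpow hε.le hεb (by norm_num)
          have h7b : ((b:ℝ) ^ 2) ^ ((1:ℝ)/2) = b := by
            rw [← Real.rpow_natCast b 2, ← Real.rpow_mul hb.le]
            norm_num
          linarith
        have hεsq : ε ^ ((1:ℝ)/2) * ε ^ ((1:ℝ)/2) = ε := by
          rw [← Real.rpow_add hε]; norm_num
        have h9 : σ * C * (t + 1) ^ γ ≤ k / ε ^ ((1:ℝ)/2) := by
          rw [le_div_iff₀ hε12]
          have h9a : σ * C * (t + 1) ^ γ * (ε ^ ((1:ℝ)/2))
              ≤ σ * C * (t + 1) ^ γ * b := by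
            apply mul_le_mul_of_nonneg_left h7; positivity
          have h9b : σ * C * (t + 1) ^ γ * b = k := by
            rw [hbdef]; field_simp
          linarith
        have h10 : k / ε ^ ((1:ℝ)/2) ≤ u * (k / ε) := by
          have h10a : ε ^ ((1:ℝ)/2) * (k / ε) = k / ε ^ ((1:ℝ)/2) := by
            rw [eq_div_iff hε12.ne']
            field_simp
            linear_combination hεsq
          have h10b : ε ^ ((1:ℝ)/2) * (k / ε) ≤ u * (k / ε) :=
            mul_le_mul_of_nonneg_right hcase.le (div_pos hk hε).le
          linarith
        have h11 : σ * C * u ^ γ ≤ σ * C * (t + 1) ^ γ := by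
          exact mul_le_mul_of_nonneg_left (Real.rpow_le_rpow hu0.le hut hγ0.le)
            (mul_nonneg hσ.le hC.le)
        linarith [hmain, h9, h10, h11, mul_nonneg (mul_nonneg hσ.le hC.le) hεpow]
    -- pass to the limit ε → 0⁺
    have hb2 : (0:ℝ) < b ^ 2 := by positivity
    have hev : ∀ᶠ ε in 𝓝[>] (0:ℝ), -(σ * C) * ε ^ (γ / 2) ≤ Y ε t := by
      filter_upwards [Ioc_mem_nhdsGT hb2] with ε hε using lower ε hε.1 hε.2
    have htend : Tendsto (fun ε : ℝ => -(σ * C) * ε ^ (γ / 2)) (𝓝[>] (0:ℝ)) (𝓝 0) := by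
      have h1 : ContinuousAt (fun x : ℝ => x ^ (γ / 2)) 0 :=
        Real.continuousAt_rpow_const 0 (γ / 2) (Or.inr (by positivity))
      have h2 : Tendsto (fun x : ℝ => x ^ (γ / 2)) (𝓝[>] (0:ℝ)) (𝓝 ((0:ℝ) ^ (γ / 2))) :=
        (h1.tendsto).mono_left nhdsWithin_le_nhds
      rw [Real.zero_rpow (by positivity)] at h2
      have := h2.const_mul (-(σ * C))
      simpa using this
    exact le_of_tendsto_of_tendsto htend (hlim t ht) hev
  refine ⟨key, ?_⟩
  ext t
  simp only [Set.mem_setOf_eq]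
  constructor
  · rintro ⟨ht, h⟩
    exact ⟨ht, le_antisymm h (key t ht)⟩
  · rintro ⟨ht, h⟩
    exact ⟨ht, le_of_eq h⟩
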